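/- Let A be a finite-dimensional simple algebra over a field F with char(F) ≠ 2. If an element c ∈ A satisfies xcx ∈ [A,A] for every x ∈ A, then c = 0. -/

import Mathlib

noncomputable section CommutatorSpanAux

open TensorProduct

namespace CommutatorSpanAux

variable {K B V : Type*} [Field K] [Ring B] [Algebra K B]
  [AddCommGroup V] [Module B V] [Module K V] [IsScalarTower K B V]

lemma smul_comm_alg' (k : K) (b : B) (x : V) : b • (k • x) = k • (b • x) := by
  have h1 : (k : K) • x = (k • (1 : B)) • x := by rw [smul_assoc, one_smul]
  have h2 : k • (b • x) = (k • (1 : B)) • (b • x) := by rw [smul_assoc, one_smul]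
  have hc : b * (k • (1 : B)) = (k • (1 : B)) * b := by
    rw [← Algebra.algebraMap_eq_smul_one]
    exact (Algebra.commutes k b).symm
  rw [h1, h2, ← mul_smul, ← mul_smul, hc]

lemma schur_scalar [IsAlgClosed K] [IsSimpleModule B V] [FiniteDimensional K V]
    (φ : V →ₗ[B] V) : ∃ k : K, ∀ x : V, φ x = k • x := by
  have : Nontrivial V := IsSimpleModule.nontrivial B V
  have hK : ∀ (k : K) (x : V), φ (k • x) = k • φ x := by
    intro k x
    calc φ (k • x) = φ ((k • (1 : B)) • x) := by rw [smul_assoc, one_smul]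
    _ = (k • (1 : B)) • φ x := φ.map_smul _ _
    _ = k • φ x := by rw [smul_assoc, one_smul]
  let φK : Module.End K V :=
    { toFun := φ, map_add' := φ.map_add, map_smul' := hK }
  obtain ⟨μ, hμ⟩ := Module.End.exists_eigenvalue φK
  obtain ⟨v, hv⟩ := hμ.exists_hasEigenvector
  let E : Submodule B V :=
    { carrier := {x | φ x = μ • x}
      add_mem' := fun {x y} hx hy => by
        simp only [Set.mem_setOf_eq] at *
        rw [map_add, hx, hy, smul_add]
      zero_mem' := by simp
      smul_mem' := fun b x hx => by
        simp only [Set.mem_setOf_eq] at *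
        rw [map_smul, hx, smul_comm_alg'] }
  have hE : E = ⊤ := by
    rcases eq_bot_or_eq_top E with hbot | htop
    · exfalso
      have hvE : v ∈ E := hv.apply_eq_smul
      rw [hbot, Submodule.mem_bot] at hvE
      exact hv.right hvE
    · exact htop
  exact ⟨μ, fun x => by
    have hx : x ∈ E := hE ▸ Submodule.mem_top
    exact hx⟩

lemma density [IsAlgClosed K] [IsSimpleModule B V] [FiniteDimensional K V]
    (φ : Module.End K V) : ∃ b : B, ∀ x : V, b • x = φ x := by
  classical
  have : Nontrivial V := IsSimpleModule.nontrivial B V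
  set n := Module.finrank K V with hn
  let bas : Module.Basis (Fin n) K V := Module.finBasis K V
  let E := Fin n → V
  haveI : IsSemisimpleModule B E := by
    apply isSemisimpleModule_of_isSemisimpleModule_submodule'
      (p := fun i => LinearMap.range (LinearMap.single B (fun _ : Fin n => V) i))
    · intro i
      have hinj : Function.Injective (LinearMap.single B (fun _ : Fin n => V) i) := by
        intro a b hab
        have hh := congrArg (fun (g : Fin n → V) => g i) hab
        simpa using hh
      exact IsSemisimpleModule.congr
        (LinearEquiv.ofInjective (LinearMap.single B (fun _ : Fin n => V) i) hinj).symm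
    · rw [eq_top_iff]
      intro x _
      have hx : x = ∑ j : Fin n, Pi.single j (x j) := by
        rw [Finset.univ_sum_single]
      rw [hx]
      apply Submodule.sum_mem
      intro j _
      apply Submodule.mem_iSup_of_mem j
      exact ⟨x j, rfl⟩
  let Φ : B →ₗ[B] E :=
    { toFun := fun b => fun i => b • bas i
      map_add' := fun b b' => by funext i; exact add_smul b b' _
      map_smul' := fun b b' => by
        funext i
        exact mul_smul b b' (bas i) }
  let N : Submodule B E := LinearMap.range Φ
  obtain ⟨W, hW⟩ := exists_isCompl N
  let π₀ : E →ₗ[B] W := Submodule.linearProjOfIsCompl W N hW.symm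
  let π : E →ₗ[B] E := W.subtype.comp π₀
  have hπN : ∀ x ∈ N, π x = 0 := by
    intro x hx
    have h0 : π₀ x = 0 := Submodule.linearProjOfIsCompl_apply_right' hW.symm hx
    simp [π, h0]
  have hπW : ∀ w : W, π (w : E) = (w : E) := by
    intro w
    show ((Submodule.projectionOnto W N hW.symm (w : E) : W) : E) = w
    rw [Submodule.projectionOnto_apply_left hW.symm w]
  have comps : ∀ i j : Fin n, ∃ k : K, ∀ u : V,
      π (Pi.single j u) i = k • u := by
    intro i j
    obtain ⟨k, hk⟩ := schur_scalar (K := K)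
      ((LinearMap.proj i).comp (π.comp (LinearMap.single B (fun _ : Fin n => V) j)))
    exact ⟨k, fun u => hk u⟩
  choose lam hlam using comps
  have hbasN : (fun i => bas i) ∈ N := ⟨1, by funext i; exact one_smul _ _⟩
  have hπbas : π (fun i => bas i) = 0 := hπN _ hbasN
  have hlam0 : ∀ i j, lam i j = 0 := by
    intro i j
    have hsum : ∑ l : Fin n, lam i l • bas l = 0 := by
      have hx : (fun l => bas l : E) = ∑ l : Fin n, Pi.single l (bas l) :=
        (Finset.univ_sum_single _).symm
      calc ∑ l : Fin n, lam i l • bas l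
          = ∑ l : Fin n, π (Pi.single l (bas l)) i := by
            refine Finset.sum_congr rfl fun l _ => (hlam i l (bas l)).symm
        _ = (∑ l : Fin n, π (Pi.single l (bas l))) i := by
            rw [Finset.sum_apply]
        _ = π (fun l => bas l) i := by rw [← map_sum, ← hx]
        _ = 0 := by rw [hπbas]; rfl
    exact linearIndependent_iff'.mp bas.linearIndependent Finset.univ _ hsum j
      (Finset.mem_univ j)
  have hπ0 : ∀ x : E, π x = 0 := by
    intro x
    have hx : x = ∑ j : Fin n, Pi.single j (x j) := (Finset.univ_sum_single _).symm
    rw [hx, map_sum]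
    refine Finset.sum_eq_zero fun j _ => ?_
    funext i
    show π (Pi.single j (x j)) i = 0
    rw [hlam i j (x j), hlam0, zero_smul]
  have hWbot : W = ⊥ := by
    rw [eq_bot_iff]
    intro w hw
    have h0 : π w = 0 := hπ0 w
    rw [hπW ⟨w, hw⟩] at h0
    simpa using h0
  have hNtop : N = ⊤ := by
    have hsup := hW.sup_eq_top
    rw [hWbot, sup_bot_eq] at hsup
    exact hsup
  have htarget : (fun i => φ (bas i) : E) ∈ N := hNtop ▸ Submodule.mem_top
  obtain ⟨b, hb⟩ := htarget
  refine ⟨b, fun x => ?_⟩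
  let ρb : V →ₗ[K] V :=
    { toFun := fun x => b • x
      map_add' := fun x y => smul_add b x y
      map_smul' := fun k x => smul_comm_alg' k b x }
  have hρ : ρb = φ := by
    apply bas.ext
    intro i
    exact congr_fun hb i
  exact LinearMap.congr_fun hρ x

lemma span_commutator_ne_top_aux (K B V : Type*) [Field K] [IsAlgClosed K] [Ring B] [Algebra K B]
    [AddCommGroup V] [Module B V] [Module K V] [IsScalarTower K B V]
    [IsSimpleModule B V] [FiniteDimensional K V] :
    Submodule.span K {z : B | ∃ u v : B, z = u * v - v * u} ≠ ⊤ := by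
  classical
  intro htop
  have : Nontrivial V := IsSimpleModule.nontrivial B V
  let ρ : B → Module.End K V := fun b =>
    { toFun := fun x => b • x
      map_add' := fun x y => smul_add b x y
      map_smul' := fun k x => smul_comm_alg' k b x }
  have hρmul : ∀ b b' : B, ρ (b * b') = ρ b * ρ b' := by
    intro b b'
    ext x
    exact mul_smul b b' x
  let τ : B →ₗ[K] K :=
    { toFun := fun b => LinearMap.trace K V (ρ b)
      map_add' := fun b b' => by
        have h : ρ (b + b') = ρ b + ρ b' := by ext x; exact add_smul b b' x
        show LinearMap.trace K V (ρ (b + b')) = _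
        rw [h, map_add]
      map_smul' := fun k b => by
        have h : ρ (k • b) = k • ρ b := by
          ext x
          show (k • b) • x = k • (b • x)
          rw [smul_assoc]
        show LinearMap.trace K V (ρ (k • b)) = k • LinearMap.trace K V (ρ b)
        rw [h, map_smul] }
  have hτ0 : ∀ z ∈ Submodule.span K {z : B | ∃ u v : B, z = u * v - v * u}, τ z = 0 := by
    intro z hz
    have hle : Submodule.span K {z : B | ∃ u v : B, z = u * v - v * u} ≤ LinearMap.ker τ := by
      rw [Submodule.span_le]
      rintro _ ⟨u, v, rfl⟩
      simp only [SetLike.mem_coe, LinearMap.mem_ker, map_sub]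
      show LinearMap.trace K V (ρ (u * v)) - LinearMap.trace K V (ρ (v * u)) = 0
      rw [hρmul, hρmul, LinearMap.trace_mul_comm, sub_self]
    exact hle hz
  let n := Module.finrank K V
  have hn : 0 < n := Module.finrank_pos
  let bas : Module.Basis (Fin n) K V := Module.finBasis K V
  let i0 : Fin n := ⟨0, hn⟩
  let f : Module.End K V := Matrix.toLin bas bas (Matrix.single i0 i0 (1 : K))
  have hf : LinearMap.trace K V f = 1 := by
    rw [LinearMap.trace_eq_matrix_trace K bas, LinearMap.toMatrix_toLin]
    exact Matrix.trace_single_eq_same i0 (1 : K)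
  obtain ⟨b, hb⟩ := density (K := K) (B := B) f
  have h1 : τ b = 1 := by
    have hbf : ρ b = f := LinearMap.ext hb
    show LinearMap.trace K V (ρ b) = 1
    rw [hbf, hf]
  have h0 : τ b = 0 := hτ0 b (htop ▸ Submodule.mem_top)
  rw [h1] at h0
  exact one_ne_zero h0

lemma span_commutator_ne_top (K B : Type*) [Field K] [IsAlgClosed K] [Ring B] [Algebra K B]
    [FiniteDimensional K B] [Nontrivial B] :
    Submodule.span K {z : B | ∃ u v : B, z = u * v - v * u} ≠ ⊤ := by
  classical
  obtain ⟨m, hm⟩ := Ideal.exists_maximal B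
  haveI : IsSimpleModule B (B ⧸ m) := isSimpleModule_iff_isCoatom.mpr (Ideal.isMaximal_def.mp hm)
  haveI : FiniteDimensional K (B ⧸ m) := by
    let g : B →ₗ[K] B ⧸ m :=
      { toFun := Submodule.mkQ m
        map_add' := fun x y => map_add _ _ _
        map_smul' := fun k x => by
          simp only [RingHom.id_apply]
          calc Submodule.mkQ m (k • x) = Submodule.mkQ m ((k • (1 : B)) • x) := by
                rw [smul_assoc, one_smul]
          _ = (k • (1 : B)) • Submodule.mkQ m x := map_smul _ _ _
          _ = k • Submodule.mkQ m x := by rw [smul_assoc, one_smul] }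
    exact Module.Finite.of_surjective g (Submodule.mkQ_surjective m)
  exact span_commutator_ne_top_aux K B (B ⧸ m)

end CommutatorSpanAux

end CommutatorSpanAux

open TensorProduct CommutatorSpanAux in
/-- Let `A` be a finite-dimensional simple algebra over a field `F` with `char F ≠ 2`.
If `c ∈ A` satisfies `x * c * x ∈ [A,A]` for every `x ∈ A`, then `c = 0`. -/
theorem eq_zero_of_conj_mem_commutator_span (F A : Type*) [Field F] [Ring A] [Algebra F A]
    [FiniteDimensional F A] [IsSimpleRing A] (h2 : (2 : F) ≠ 0) (c : A)
    (h : ∀ x : A, x * c * x ∈ Submodule.span F {z : A | ∃ u v : A, z = u * v - v * u}) :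
    c = 0 := by
  classical
  by_contra hc
  set S := Submodule.span F {z : A | ∃ u v : A, z = u * v - v * u} with hSdef
  have hcomm : ∀ u v : A, u * v - v * u ∈ S := fun u v => Submodule.subset_span ⟨u, v, rfl⟩
  have hlin : ∀ x : A, x * c + c * x ∈ S := by
    intro x
    have hid : x * c + c * x = (x + 1) * c * (x + 1) - x * c * x - 1 * c * 1 := by
      noncomm_ring
    rw [hid]
    exact Submodule.sub_mem _ (Submodule.sub_mem _ (h (x + 1)) (h x)) (h 1)
  have hxc : ∀ x : A, x * c ∈ S := by
    intro x
    have h4 : (2 : F) • (x * c) = (x * c + c * x) + (x * c - c * x) := by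
      rw [two_smul]; noncomm_ring
    have h5 : (2 : F) • (x * c) ∈ S := h4 ▸ Submodule.add_mem _ (hlin x) (hcomm x c)
    have h6 := Submodule.smul_mem S (2 : F)⁻¹ h5
    rwa [smul_smul, inv_mul_cancel₀ h2, one_smul] at h6
  have hcx : ∀ x : A, c * x ∈ S := by
    intro x
    have hid : c * x = (x * c + c * x) - x * c := by noncomm_ring
    rw [hid]
    exact Submodule.sub_mem _ (hlin x) (hxc x)
  have hxcy : ∀ x y : A, x * c * y ∈ S := by
    intro x y
    have hid : x * c * y = (x * (c * y) - (c * y) * x) + c * (y * x) := by noncomm_ring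
    rw [hid]
    exact Submodule.add_mem _ (hcomm x (c * y)) (hcx (y * x))
  -- the two-sided ideal generated by `c` is contained in `S`
  set U := Submodule.span F {z : A | ∃ x y : A, z = x * c * y} with hUdef
  have hUleft : ∀ (a : A) {u : A}, u ∈ U → a * u ∈ U := by
    intro a u hu
    induction hu using Submodule.span_induction with
    | mem z hz =>
      obtain ⟨x, y, rfl⟩ := hz
      exact Submodule.subset_span ⟨a * x, y, by noncomm_ring⟩
    | zero => simpa using Submodule.zero_mem U
    | add x y _ _ hx hy => rw [mul_add]; exact Submodule.add_mem _ hx hy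
    | smul f x _ hx => rw [mul_smul_comm]; exact Submodule.smul_mem _ _ hx
  have hUright : ∀ (a : A) {u : A}, u ∈ U → u * a ∈ U := by
    intro a u hu
    induction hu using Submodule.span_induction with
    | mem z hz =>
      obtain ⟨x, y, rfl⟩ := hz
      exact Submodule.subset_span ⟨x, y * a, by noncomm_ring⟩
    | zero => simpa using Submodule.zero_mem U
    | add x y _ _ hx hy => rw [add_mul]; exact Submodule.add_mem _ hx hy
    | smul f x _ hx => rw [smul_mul_assoc]; exact Submodule.smul_mem _ _ hx
  let J : TwoSidedIdeal A := TwoSidedIdeal.mk' (U : Set A)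
    (Submodule.zero_mem U)
    (fun hx hy => Submodule.add_mem U hx hy)
    (fun hx => Submodule.neg_mem U hx)
    (fun {x y} hy => hUleft x hy)
    (fun {x y} hx => hUright y hx)
  have hmemJ : ∀ a : A, a ∈ J ↔ a ∈ U := fun a =>
    TwoSidedIdeal.mem_mk' (U : Set A) _ _ _ _ _ a
  have hcU : c ∈ U := Submodule.subset_span ⟨1, 1, by rw [one_mul, mul_one]⟩
  haveI := (inferInstance : IsSimpleRing A).simple
  rcases eq_bot_or_eq_top J with hbot | htop
  · have hcJ : c ∈ J := (hmemJ c).mpr hcU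
    rw [hbot, TwoSidedIdeal.mem_bot] at hcJ
    exact hc hcJ
  · -- then S = ⊤
    have hStop : S = ⊤ := by
      rw [eq_top_iff]
      intro a _
      have haJ : a ∈ J := by rw [htop]; exact TwoSidedIdeal.mem_top A
      have haU : a ∈ U := (hmemJ a).mp haJ
      have hUS : U ≤ S := by
        rw [hUdef, Submodule.span_le]
        rintro _ ⟨x, y, rfl⟩
        exact hxcy x y
      exact hUS haU
    -- base change to the algebraic closure
    set K := AlgebraicClosure F
    haveI : Nontrivial (K ⊗[F] A) := by
      have hANontriv : Nontrivial A := inferInstance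
      let basA := Module.Basis.ofVectorSpace F A
      have hne : Nonempty (Module.Basis.ofVectorSpaceIndex F A) := basA.index_nonempty
      obtain ⟨i0⟩ := hne
      have hb0 : (basA.baseChange K) i0 ≠ 0 := Module.Basis.ne_zero _ i0
      exact nontrivial_of_ne _ 0 hb0
    apply span_commutator_ne_top K (K ⊗[F] A)
    -- show the span of commutators in the base change is everything
    have key : ∀ a : A, a ∈ S →
        ((1 : K) ⊗ₜ[F] a) ∈
          Submodule.span K {z : K ⊗[F] A | ∃ u v : K ⊗[F] A, z = u * v - v * u} := by
      intro a haS
      induction haS using Submodule.span_induction with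
      | mem z hz =>
        obtain ⟨u, v, rfl⟩ := hz
        refine Submodule.subset_span ⟨(1 : K) ⊗ₜ[F] u, (1 : K) ⊗ₜ[F] v, ?_⟩
        rw [TensorProduct.tmul_sub, Algebra.TensorProduct.tmul_mul_tmul,
          Algebra.TensorProduct.tmul_mul_tmul, one_mul]
      | zero => rw [TensorProduct.tmul_zero]; exact Submodule.zero_mem _
      | add x y _ _ hx hy => rw [TensorProduct.tmul_add]; exact Submodule.add_mem _ hx hy
      | smul f x _ hx =>
        rw [TensorProduct.tmul_smul]
        rw [← algebraMap_smul K f ((1 : K) ⊗ₜ[F] x)]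
        exact Submodule.smul_mem _ _ hx
    rw [Submodule.eq_top_iff']
    intro b
    induction b using TensorProduct.induction_on with
    | zero => exact Submodule.zero_mem _
    | tmul k a =>
      have hka : k ⊗ₜ[F] a = k • ((1 : K) ⊗ₜ[F] a) := by
        rw [TensorProduct.smul_tmul', smul_eq_mul, mul_one]
      rw [hka]
      exact Submodule.smul_mem _ _ (key a (hStop ▸ Submodule.mem_top))
    | add x y hx hy => exact Submodule.add_mem _ hx hy
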